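/- User-wise AMSE transfer from downlink to uplink: in the multiuser MIMO setup with the matrix T as defined, suppose β̃ ∈ ℝ^K satisfies the linear system T·β̃ = σ²·(tr(P_1),…,tr(P_K))ᵀ and β̃_k > 0 for every k, and define the uplink power allocations Q_k = β̃_k·α_k²·P_k⁻¹. Then every user achieves the same AMSE in both channels: ξ̄_k^{UL} = ξ̄_k^{DL} for all k ∈ {1,…,K}. -/

import Mathlib

open Matrix BigOperators ComplexOrder

noncomputable section

/-- A diagonal complex matrix built from a real vector. -/
def diagC {n : ℕ} (v : Fin n → ℝ) : Matrix (Fin n) (Fin n) ℂ :=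
  Matrix.diagonal (fun i => (v i : ℂ))

/-- The multiuser MIMO setup: `K` users, `N` BS antennas, per-user antenna counts `M k`,
symbol counts `S k`, estimated channels `H k`, transmit/receive filters `G k`, `U k` with
unit-norm columns, invertible real diagonal scaling factors `α k`, Hermitian positive
semidefinite antenna correlation matrices `Rb k`, `Rm k`, channel estimation error variances
`σe2 k ≥ 0` and noise variance `σ2 > 0`. -/
structure MIMOSetup (K N : ℕ) where
  M : Fin K → ℕ
  S : Fin K → ℕ
  hM : ∀ k, 0 < M k
  hS : ∀ k, 0 < S k
  H : ∀ k : Fin K, Matrix (Fin N) (Fin (M k)) ℂ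
  G : ∀ k : Fin K, Matrix (Fin N) (Fin (S k)) ℂ
  U : ∀ k : Fin K, Matrix (Fin (M k)) (Fin (S k)) ℂ
  α : ∀ k : Fin K, Fin (S k) → ℝ
  Rb : Fin K → Matrix (Fin N) (Fin N) ℂ
  Rm : ∀ k : Fin K, Matrix (Fin (M k)) (Fin (M k)) ℂ
  σe2 : Fin K → ℝ
  σ2 : ℝ
  hG : ∀ k i, ((G k)ᴴ * G k) i i = 1
  hU : ∀ k i, ((U k)ᴴ * U k) i i = 1
  hα : ∀ k i, α k i ≠ 0
  hRb : ∀ k, (Rb k).PosSemidef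
  hRm : ∀ k, (Rm k).PosSemidef
  hσe2 : ∀ k, 0 ≤ σe2 k
  hσ2 : 0 < σ2

namespace MIMOSetup

variable {K N : ℕ} (s : MIMOSetup K N)

/-- `α_k` as a diagonal complex matrix. -/
def αM (k : Fin K) : Matrix (Fin (s.S k)) (Fin (s.S k)) ℂ := diagC (s.α k)

/-- `Γ_k^{DL}` for downlink power allocations `P`. -/
def GammaDL (P : ∀ k : Fin K, Matrix (Fin (s.S k)) (Fin (s.S k)) ℂ) (k : Fin K) :
    Matrix (Fin (s.M k)) (Fin (s.M k)) ℂ :=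
  (s.H k)ᴴ * (∑ i, s.G i * P i * (s.G i)ᴴ) * s.H k
    + ((s.σe2 k : ℂ) * (s.Rb k * ∑ i, s.G i * P i * (s.G i)ᴴ).trace) • s.Rm k
    + (s.σ2 : ℂ) • 1

/-- `Γ_c` for uplink power allocations `Q`. -/
def GammaC (Q : ∀ k : Fin K, Matrix (Fin (s.S k)) (Fin (s.S k)) ℂ) :
    Matrix (Fin N) (Fin N) ℂ :=
  (∑ i, (s.H i * s.U i * Q i * (s.U i)ᴴ * (s.H i)ᴴ
    + ((s.σe2 i : ℂ) * (s.Rm i * (s.U i * Q i * (s.U i)ᴴ)).trace) • s.Rb i))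
    + (s.σ2 : ℂ) • 1

/-- The `k`-th user downlink AMSE `ξ̄_k^{DL}`. -/
def xiDLk (P : ∀ k : Fin K, Matrix (Fin (s.S k)) (Fin (s.S k)) ℂ) (k : Fin K) : ℝ :=
  (s.S k : ℝ) + (((P k)⁻¹ * (s.αM k) ^ 2 * (s.U k)ᴴ * s.GammaDL P k * s.U k).trace).re
    - 2 * ((((s.G k)ᴴ * s.H k * s.U k * s.αM k).trace).re)

/-- The `k`-th user uplink AMSE `ξ̄_k^{UL}`. -/
def xiULk (Q : ∀ k : Fin K, Matrix (Fin (s.S k)) (Fin (s.S k)) ℂ) (k : Fin K) : ℝ :=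
  (s.S k : ℝ) + (((Q k)⁻¹ * (s.αM k) ^ 2 * (s.G k)ᴴ * s.GammaC Q * s.G k).trace).re
    - 2 * (((s.αM k * (s.G k)ᴴ * s.H k * s.U k).trace).re)

/-- Downlink sum AMSE `ξ̄^{DL}`. -/
def xiDL (P : ∀ k : Fin K, Matrix (Fin (s.S k)) (Fin (s.S k)) ℂ) : ℝ := ∑ k, s.xiDLk P k

/-- Uplink sum AMSE `ξ̄^{UL}`. -/
def xiUL (Q : ∀ k : Fin K, Matrix (Fin (s.S k)) (Fin (s.S k)) ℂ) : ℝ := ∑ k, s.xiULk Q k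

end MIMOSetup

namespace MIMOSetup

variable {K N : ℕ}

/-- The matrix `T` of the user-wise downlink-to-uplink AMSE transfer (eq. (15)). -/
def Tmat (s : MIMOSetup K N) (P : ∀ k : Fin K, Fin (s.S k) → ℝ) :
    Matrix (Fin K) (Fin K) ℝ := fun k l =>
  if k = l then
    s.σ2 * (((diagC (P k))⁻¹ * (s.αM k) ^ 2).trace).re
      + ∑ i ∈ Finset.univ.erase k,
        ((((diagC (P k))⁻¹ * (s.αM k) ^ 2 * (s.U k)ᴴ * (s.H k)ᴴ * s.G i * diagC (P i)
            * (s.G i)ᴴ * s.H k * s.U k).trace).re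
          + s.σe2 k * (((s.Rb k * (s.G i * diagC (P i) * (s.G i)ᴴ)).trace).re)
            * (((s.Rm k * (s.U k * (s.αM k) ^ 2 * (diagC (P k))⁻¹ * (s.U k)ᴴ)).trace).re))
  else
    -((((diagC (P l))⁻¹ * (s.αM l) ^ 2 * (s.U l)ᴴ * (s.H l)ᴴ * s.G k * diagC (P k)
        * (s.G k)ᴴ * s.H l * s.U l).trace).re
      + s.σe2 l * (((s.Rm l * (s.U l * (s.αM l) ^ 2 * (diagC (P l))⁻¹ * (s.U l)ᴴ)).trace).re)
        * (((s.Rb l * (s.G k * diagC (P k) * (s.G k)ᴴ)).trace).re))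

end MIMOSetup

section Aux
variable {n m : ℕ}

lemma diagC_mul_diagC (v w : Fin n → ℝ) : diagC v * diagC w = diagC (fun i => v i * w i) := by
  unfold diagC
  rw [Matrix.diagonal_mul_diagonal]
  congr 1; funext i; simp

lemma diagC_inv (v : Fin n → ℝ) (hv : ∀ i, v i ≠ 0) : (diagC v)⁻¹ = diagC fun i => (v i)⁻¹ := by
  apply Matrix.inv_eq_right_inv
  rw [diagC_mul_diagC]
  have : (fun i => v i * (v i)⁻¹) = fun _ => (1:ℝ) := funext fun i => mul_inv_cancel₀ (hv i)
  rw [this]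
  unfold diagC
  simp

lemma trace_diagC_mul (v : Fin n → ℝ) (M : Matrix (Fin n) (Fin n) ℂ) :
    (diagC v * M).trace = ∑ i, (v i : ℂ) * M i i := by
  simp [Matrix.trace, Matrix.diag, diagC, Matrix.diagonal_mul]

lemma trace_diagC (v : Fin n → ℝ) : (diagC v).trace = ∑ i, (v i:ℂ) := by
  simp [diagC, Matrix.trace, Matrix.diag]

lemma diagC_smul (c : ℝ) (v : Fin n → ℝ) : (c:ℂ) • diagC v = diagC fun i => c * v i := by
  unfold diagC
  ext i j
  by_cases h : i = j <;> simp [Matrix.diagonal_apply, h]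

lemma diagC_isHermitian (v : Fin n → ℝ) : (diagC v).IsHermitian := by
  unfold diagC
  ext i j
  by_cases h : i = j
  · simp [Matrix.conjTranspose_apply, Matrix.diagonal_apply, h, Complex.conj_ofReal]
  · simp [Matrix.conjTranspose_apply, Matrix.diagonal_apply, h, Ne.symm h]

lemma trace_mul_hermitian_im (A B : Matrix (Fin n) (Fin n) ℂ)
    (hA : A.IsHermitian) (hB : B.IsHermitian) : ((A * B).trace).im = 0 := by
  have h : star ((A*B).trace) = (A*B).trace := by
    rw [← Matrix.trace_conjTranspose, Matrix.conjTranspose_mul, hA.eq, hB.eq,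
      Matrix.trace_mul_comm]
  have h2 := congrArg Complex.im h
  simp at h2
  linarith

lemma key_algebra {K : ℕ} (k : Fin K)
    (A Bb : Fin K → Fin K → ℝ) (C E : Fin K → ℝ)
    (D TP σ2 : ℝ) (β : Fin K → ℝ) (hβ : β k ≠ 0)
    (hsys : (σ2 * D + ∑ i ∈ Finset.univ.erase k, (A k i + E k * Bb k i * C k)) * β k
        + ∑ l ∈ Finset.univ.erase k, (-(A l k + E l * C l * Bb l k)) * β l = σ2 * TP) :
    (β k)⁻¹ * ((∑ i, (β i * A i k + E i * (β i * (C i * Bb i k)))) + σ2 * TP)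
      = (∑ i, A k i) + E k * (∑ i, Bb k i) * C k + σ2 * D := by
  rw [inv_mul_eq_iff_eq_mul₀ hβ]
  rw [← Finset.add_sum_erase _ _ (Finset.mem_univ k),
      ← Finset.add_sum_erase _ (fun i => A k i) (Finset.mem_univ k),
      ← Finset.add_sum_erase _ (fun i => Bb k i) (Finset.mem_univ k)]
  have hS : ∑ i ∈ Finset.univ.erase k, (β i * A i k + E i * (β i * (C i * Bb i k)))
      = ∑ l ∈ Finset.univ.erase k, ((A l k + E l * C l * Bb l k) * β l) :=
    Finset.sum_congr rfl (by intros; ring)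
  have hT : ∑ i ∈ Finset.univ.erase k, (A k i + E k * Bb k i * C k)
      = (∑ i ∈ Finset.univ.erase k, A k i)
        + E k * (∑ i ∈ Finset.univ.erase k, Bb k i) * C k := by
    rw [Finset.sum_add_distrib]
    congr 1
    rw [Finset.mul_sum, Finset.sum_mul]
  have hN : ∑ l ∈ Finset.univ.erase k, (-(A l k + E l * C l * Bb l k)) * β l
      = -∑ l ∈ Finset.univ.erase k, ((A l k + E l * C l * Bb l k) * β l) := by
    rw [← Finset.sum_neg_distrib]
    exact Finset.sum_congr rfl (by intros; ring)
  rw [hT, hN] at hsys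
  rw [hS]
  linear_combination -hsys

end Aux

set_option maxHeartbeats 2000000 in
/-- **User-wise AMSE transfer from downlink to uplink.** If `β̃ ∈ ℝ^K` solves
`T·β̃ = σ²·(tr P_1, …, tr P_K)ᵀ` with `β̃_k > 0` for every `k`, and the uplink power
allocations are `Q_k = β̃_k • α_k² P_k⁻¹`, then every user achieves the same AMSE in both
channels. -/
theorem userwise_AMSE_transfer_downlink_to_uplink {K N : ℕ} (hK : 0 < K) (hN : 0 < N)
    (s : MIMOSetup K N)
    (P : ∀ k : Fin K, Fin (s.S k) → ℝ) (hP : ∀ k i, 0 < P k i)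
    (βt : Fin K → ℝ) (hβtpos : ∀ k, 0 < βt k)
    (hβt : s.Tmat P *ᵥ βt = fun k => s.σ2 * ((diagC (P k)).trace).re)
    (Q : ∀ k : Fin K, Matrix (Fin (s.S k)) (Fin (s.S k)) ℂ)
    (hQ : ∀ k, Q k = (βt k : ℂ) • ((s.αM k) ^ 2 * (diagC (P k))⁻¹)) :
    ∀ k, s.xiULk Q k = s.xiDLk (fun k => diagC (P k)) k := by
  intro k
  have hαsq : ∀ l, s.αM l ^ 2 = diagC (fun i => (s.α l i) ^ 2) := by
    intro l
    rw [sq, MIMOSetup.αM, diagC_mul_diagC]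
    congr 1; funext i; ring
  have hPinv : ∀ l, (diagC (P l))⁻¹ = diagC (fun i => (P l i)⁻¹) :=
    fun l => diagC_inv _ (fun i => (hP l i).ne')
  have hPA : ∀ l, (diagC (P l))⁻¹ * s.αM l ^ 2
      = diagC (fun i => (P l i)⁻¹ * (s.α l i) ^ 2) := by
    intro l; rw [hPinv, hαsq, diagC_mul_diagC]
  have hAP : ∀ l, s.αM l ^ 2 * (diagC (P l))⁻¹
      = diagC (fun i => (P l i)⁻¹ * (s.α l i) ^ 2) := by
    intro l
    rw [hPinv, hαsq, diagC_mul_diagC]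
    exact congrArg diagC (funext fun i => mul_comm _ _)
  have hQd : ∀ l, Q l = diagC (fun i => βt l * ((P l i)⁻¹ * (s.α l i) ^ 2)) := by
    intro l; rw [hQ, hAP, diagC_smul]
  have hne : ∀ l i, βt l * ((P l i)⁻¹ * (s.α l i) ^ 2) ≠ 0 := fun l i =>
    mul_ne_zero (hβtpos l).ne'
      (mul_ne_zero (inv_ne_zero (hP l i).ne') (pow_ne_zero 2 (s.hα l i)))
  have hQinv : ∀ l, (Q l)⁻¹
      = diagC (fun i => (βt l * ((P l i)⁻¹ * (s.α l i) ^ 2))⁻¹) := by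
    intro l; rw [hQd]; exact diagC_inv _ (hne l)
  have hQP : (Q k)⁻¹ * s.αM k ^ 2 = (((βt k)⁻¹ : ℝ) : ℂ) • diagC (P k) := by
    rw [hQinv, hαsq, diagC_mul_diagC, diagC_smul]
    refine congrArg diagC (funext fun i => ?_)
    have h1 : βt k ≠ 0 := (hβtpos k).ne'
    have h2 : P k i ≠ 0 := (hP k i).ne'
    have h3 : s.α k i ≠ 0 := s.hα k i
    field_simp
  -- hermitian realness facts
  have hbim : ∀ l i, ((s.Rb l * (s.G i * diagC (P i) * (s.G i)ᴴ)).trace).im = 0 := by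
    intro l i
    exact trace_mul_hermitian_im _ _ (s.hRb l).1
      (Matrix.isHermitian_mul_mul_conjTranspose _ (diagC_isHermitian _))
  have hcim : ∀ l,
      ((s.Rm l * (s.U l * s.αM l ^ 2 * (diagC (P l))⁻¹ * (s.U l)ᴴ)).trace).im = 0 := by
    intro l
    have h1 : s.U l * s.αM l ^ 2 * (diagC (P l))⁻¹ * (s.U l)ᴴ
        = s.U l * (s.αM l ^ 2 * (diagC (P l))⁻¹) * (s.U l)ᴴ := by
      rw [Matrix.mul_assoc (s.U l)]
    rw [h1, hAP]
    exact trace_mul_hermitian_im _ _ (s.hRm l).1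
      (Matrix.isHermitian_mul_mul_conjTranspose _ (diagC_isHermitian _))
  -- commuting pair lemmas
  have hpair1 : ∀ (l : Fin K) {m : ℕ} (X : Matrix (Fin (s.S l)) (Fin m) ℂ),
      (diagC (P l))⁻¹ * (s.αM l ^ 2 * X)
        = diagC (fun i => (P l i)⁻¹ * (s.α l i) ^ 2) * X := by
    intro l m X; rw [← Matrix.mul_assoc, hPA l]
  have hpair2 : ∀ (l : Fin K) {m : ℕ} (X : Matrix (Fin (s.S l)) (Fin m) ℂ),
      s.αM l ^ 2 * ((diagC (P l))⁻¹ * X)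
        = diagC (fun i => (P l i)⁻¹ * (s.α l i) ^ 2) * X := by
    intro l m X; rw [← Matrix.mul_assoc, hAP l]
  -- rotation lemmas (right-assoc normal forms)
  have hMRmU : ∀ l : Fin K,
      ((diagC (P l))⁻¹ * (s.αM l ^ 2 * ((s.U l)ᴴ * (s.Rm l * s.U l)))).trace
        = (s.Rm l * (s.U l * (s.αM l ^ 2 * ((diagC (P l))⁻¹ * (s.U l)ᴴ)))).trace := by
    intro l
    rw [hpair1 l, hpair2 l]
    rw [Matrix.trace_mul_comm]
    simp only [Matrix.mul_assoc]
    rw [Matrix.trace_mul_comm]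
    simp only [Matrix.mul_assoc]
  have hMUU : ∀ l : Fin K,
      ((diagC (P l))⁻¹ * (s.αM l ^ 2 * ((s.U l)ᴴ * s.U l))).trace
        = ((diagC (P l))⁻¹ * s.αM l ^ 2).trace := by
    intro l
    rw [hpair1 l, trace_diagC_mul, hPA l, trace_diagC]
    refine Finset.sum_congr rfl fun i _ => ?_
    rw [s.hU l i, mul_one]
  have hPGG : ∀ l : Fin K,
      (diagC (P l) * ((s.G l)ᴴ * s.G l)).trace = (diagC (P l)).trace := by
    intro l
    rw [trace_diagC_mul, trace_diagC]
    refine Finset.sum_congr rfl fun i _ => ?_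
    rw [s.hG l i, mul_one]
  have hArot : ∀ l i : Fin K,
      (diagC (P l) * ((s.G l)ᴴ * (s.H i * (s.U i * (s.αM i ^ 2 * ((diagC (P i))⁻¹
          * ((s.U i)ᴴ * ((s.H i)ᴴ * s.G l)))))))).trace
        = ((diagC (P i))⁻¹ * (s.αM i ^ 2 * ((s.U i)ᴴ * ((s.H i)ᴴ * (s.G l
          * (diagC (P l) * ((s.G l)ᴴ * (s.H i * s.U i)))))))).trace := by
    intro l i
    rw [hpair2 i, hpair1 i]
    rw [Matrix.trace_mul_comm]
    simp only [Matrix.mul_assoc]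
    rw [Matrix.trace_mul_comm]
    simp only [Matrix.mul_assoc]
    rw [Matrix.trace_mul_comm]
    simp only [Matrix.mul_assoc]
    rw [Matrix.trace_mul_comm]
    simp only [Matrix.mul_assoc]
  have hBrot : ∀ l i : Fin K,
      (diagC (P l) * ((s.G l)ᴴ * (s.Rb i * s.G l))).trace
        = (s.Rb i * (s.G l * (diagC (P l) * (s.G l)ᴴ))).trace := by
    intro l i
    rw [Matrix.trace_mul_comm]
    simp only [Matrix.mul_assoc]
    rw [Matrix.trace_mul_comm]
    simp only [Matrix.mul_assoc]
  have hcross : (s.αM k * (s.G k)ᴴ * s.H k * s.U k).trace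
      = ((s.G k)ᴴ * s.H k * s.U k * s.αM k).trace := by
    simp only [Matrix.mul_assoc]
    rw [Matrix.trace_mul_comm]
    simp only [Matrix.mul_assoc]
  -- downlink expansion
  have hDLtrace : (((diagC (P k))⁻¹ * s.αM k ^ 2 * (s.U k)ᴴ
        * s.GammaDL (fun l => diagC (P l)) k * s.U k).trace)
      = (∑ i, (((diagC (P k))⁻¹ * s.αM k ^ 2 * (s.U k)ᴴ * (s.H k)ᴴ * s.G i * diagC (P i) * (s.G i)ᴴ * s.H k * s.U k).trace))
        + (s.σe2 k : ℂ) * (∑ i, ((s.Rb k * (s.G i * diagC (P i) * (s.G i)ᴴ)).trace)) * ((s.Rm k * (s.U k * s.αM k ^ 2 * (diagC (P k))⁻¹ * (s.U k)ᴴ)).trace)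
        + (s.σ2 : ℂ) * (((diagC (P k))⁻¹ * s.αM k ^ 2).trace) := by
    rw [MIMOSetup.GammaDL]
    simp only [Matrix.mul_add, Matrix.add_mul, Matrix.trace_add, Matrix.mul_smul,
      Matrix.smul_mul, Matrix.trace_smul, smul_eq_mul, Matrix.mul_sum, Matrix.sum_mul,
      Matrix.trace_sum, Matrix.mul_one, Matrix.mul_assoc]
    rw [hMRmU k, hMUU k]
  -- uplink expansion
  have hULtrace : (((Q k)⁻¹ * s.αM k ^ 2 * (s.G k)ᴴ * s.GammaC Q * s.G k).trace)
      = (((βt k)⁻¹ : ℝ) : ℂ) *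
        ((∑ i, ((βt i : ℂ) * (((diagC (P i))⁻¹ * s.αM i ^ 2 * (s.U i)ᴴ * (s.H i)ᴴ * s.G k * diagC (P k) * (s.G k)ᴴ * s.H i * s.U i).trace)
            + (s.σe2 i : ℂ) * ((βt i : ℂ) * (((s.Rm i * (s.U i * s.αM i ^ 2 * (diagC (P i))⁻¹ * (s.U i)ᴴ)).trace) * ((s.Rb i * (s.G k * diagC (P k) * (s.G k)ᴴ)).trace)))))
          + (s.σ2 : ℂ) * ((diagC (P k)).trace)) := by
    rw [hQP, MIMOSetup.GammaC]
    simp only [hQ, Matrix.mul_add, Matrix.add_mul, Matrix.mul_smul, Matrix.smul_mul,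
      Matrix.trace_add, Matrix.trace_smul, smul_eq_mul, Matrix.mul_sum,
      Matrix.sum_mul, Matrix.trace_sum, Matrix.mul_one, Matrix.mul_assoc]
    rw [hPGG k]
    simp only [hArot, hBrot]
    rw [mul_add, Finset.mul_sum]
    congr 1
    · exact Finset.sum_congr rfl fun i _ => by ring
    · ring
  -- the linear system row at k
  have hrow := congrFun hβt k
  simp only [Matrix.mulVec, dotProduct] at hrow
  rw [← Finset.add_sum_erase _ (fun l => s.Tmat P k l * βt l) (Finset.mem_univ k)] at hrow
  have hTkk : s.Tmat P k k
      = s.σ2 * ((((diagC (P k))⁻¹ * s.αM k ^ 2).trace).re)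
        + ∑ i ∈ Finset.univ.erase k,
          (((((diagC (P k))⁻¹ * s.αM k ^ 2 * (s.U k)ᴴ * (s.H k)ᴴ * s.G i * diagC (P i) * (s.G i)ᴴ * s.H k * s.U k).trace)).re + s.σe2 k * ((((s.Rb k * (s.G i * diagC (P i) * (s.G i)ᴴ)).trace)).re) * ((((s.Rm k * (s.U k * s.αM k ^ 2 * (diagC (P k))⁻¹ * (s.U k)ᴴ)).trace)).re)) := by
    rw [MIMOSetup.Tmat, if_pos rfl]
  have hTkl : ∀ l ∈ Finset.univ.erase k, s.Tmat P k l * βt l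
      = (-(((((diagC (P l))⁻¹ * s.αM l ^ 2 * (s.U l)ᴴ * (s.H l)ᴴ * s.G k * diagC (P k) * (s.G k)ᴴ * s.H l * s.U l).trace)).re + s.σe2 l * ((((s.Rm l * (s.U l * s.αM l ^ 2 * (diagC (P l))⁻¹ * (s.U l)ᴴ)).trace)).re) * ((((s.Rb l * (s.G k * diagC (P k) * (s.G k)ᴴ)).trace)).re))) * βt l := by
    intro l hl
    rw [MIMOSetup.Tmat, if_neg (fun h => Finset.ne_of_mem_erase hl h.symm)]
  rw [hTkk, Finset.sum_congr rfl hTkl] at hrow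
  have hkey := key_algebra k (fun l i => ((((diagC (P l))⁻¹ * s.αM l ^ 2 * (s.U l)ᴴ * (s.H l)ᴴ * s.G i * diagC (P i) * (s.G i)ᴴ * s.H l * s.U l).trace)).re) (fun l i => (((s.Rb l * (s.G i * diagC (P i) * (s.G i)ᴴ)).trace)).re)
    (fun l => (((s.Rm l * (s.U l * s.αM l ^ 2 * (diagC (P l))⁻¹ * (s.U l)ᴴ)).trace)).re) s.σe2 ((((diagC (P k))⁻¹ * s.αM k ^ 2).trace).re)
    (((diagC (P k)).trace).re) s.σ2 βt (hβtpos k).ne' hrow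
  -- final assembly
  rw [MIMOSetup.xiULk, MIMOSetup.xiDLk, hcross, hULtrace, hDLtrace]
  congr 1
  simp only [Complex.mul_re, Complex.add_re, Complex.add_im, Complex.mul_im,
    Complex.ofReal_re, Complex.ofReal_im, Complex.re_sum, Complex.im_sum,
    hbim, hcim, zero_mul, mul_zero, sub_zero, zero_add, add_zero, zero_sub, neg_zero]
  exact congrArg (fun t => (s.S k : ℝ) + t) hkey
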